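/- The chain T = T_1 > T_2 > ... > T_n = 1, where T_i is the set of upper unitriangular matrices over a commutative ring K with their first i−1 superdiagonals equal to zero, is the lower central series of T = UT(n,K): specifically, the commutator subgroup [T, T_i] equals T_{i+1} when K = ℤ or ℚ, and in general [T, T_i] ≤ T_{i+1}. -/

import Mathlib

/-- `g` is upper unitriangular: ones on the diagonal, zeros below it. -/
def IsUnitri {n : ℕ} {K : Type*} [CommRing K] (g : Matrix (Fin n) (Fin n) K) : Prop :=
  (∀ j, g j j = 1) ∧ ∀ j k : Fin n, (k : ℕ) < (j : ℕ) → g j k = 0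

/-- `g` lies in `T_i`: `g` is upper unitriangular and its first `i - 1`
superdiagonals vanish. -/
def InT {n : ℕ} (i : ℕ) {K : Type*} [CommRing K] (g : Matrix (Fin n) (Fin n) K) : Prop :=
  IsUnitri g ∧ ∀ j k : Fin n, (j : ℕ) < (k : ℕ) → (k : ℕ) < (j : ℕ) + i → g j k = 0

open Matrix

open scoped commutatorElement

variable {n : ℕ} {K : Type*} [CommRing K]

def InN {n : ℕ} (i : ℕ) {K : Type*} [CommRing K] (A : Matrix (Fin n) (Fin n) K) : Prop :=
  ∀ j k : Fin n, (k : ℕ) < (j : ℕ) + i → A j k = 0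

lemma InN.mono {a b : ℕ} (h : b ≤ a) {A : Matrix (Fin n) (Fin n) K} (hA : InN a A) : InN b A :=
  fun j k hk => hA j k (lt_of_lt_of_le hk (by omega))

lemma InN.mul {a b : ℕ} {A B : Matrix (Fin n) (Fin n) K} (hA : InN a A) (hB : InN b B) :
    InN (a + b) (A * B) := by
  intro j k hk
  rw [Matrix.mul_apply]
  refine Finset.sum_eq_zero fun l _ => ?_
  by_cases hl : (l : ℕ) < (j : ℕ) + a
  · rw [hA j l hl, zero_mul]
  · rw [hB l k (by omega), mul_zero]

lemma InN.sub {a : ℕ} {A B : Matrix (Fin n) (Fin n) K} (hA : InN a A) (hB : InN a B) :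
    InN a (A - B) := fun j k hk => by simp [Matrix.sub_apply, hA j k hk, hB j k hk]

lemma InN.add {a : ℕ} {A B : Matrix (Fin n) (Fin n) K} (hA : InN a A) (hB : InN a B) :
    InN a (A + B) := fun j k hk => by simp [Matrix.add_apply, hA j k hk, hB j k hk]

lemma InN.neg {a : ℕ} {A : Matrix (Fin n) (Fin n) K} (hA : InN a A) :
    InN a (-A) := fun j k hk => by simp [hA j k hk]

lemma InT_iff_InN {i : ℕ} (hi : 1 ≤ i) {g : Matrix (Fin n) (Fin n) K} :
    InT i g ↔ InN i (g - 1) := by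
  constructor
  · rintro ⟨⟨hd, hl⟩, hs⟩ j k hk
    rcases lt_trichotomy (k : ℕ) (j : ℕ) with h | h | h
    · simp [Matrix.sub_apply, hl j k h, Matrix.one_apply_ne (fun e => by omega : j ≠ k)]
    · have : j = k := Fin.ext h.symm
      subst this
      simp [Matrix.sub_apply, hd j]
    · simp [Matrix.sub_apply, hs j k h hk, Matrix.one_apply_ne (fun e => by omega : j ≠ k)]
  · intro h
    refine ⟨⟨fun j => ?_, fun j k hk => ?_⟩, fun j k hjk hk => ?_⟩
    · have := h j j (by omega)
      rw [Matrix.sub_apply, Matrix.one_apply_eq, sub_eq_zero] at this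
      exact this
    · have := h j k (by omega)
      simpa [Matrix.sub_apply, Matrix.one_apply_ne (fun e => by omega : j ≠ k)] using this
    · have := h j k hk
      simpa [Matrix.sub_apply, Matrix.one_apply_ne (fun e => by omega : j ≠ k)] using this

/-- all of `g⁻¹`'s strictly-lower entries vanish, and more: InN i (g⁻¹ - 1). -/
lemma inv_inN {i : ℕ} (hi : 1 ≤ i) {g : (Matrix (Fin n) (Fin n) K)ˣ}
    (hg : InN i ((g : Matrix (Fin n) (Fin n) K) - 1)) :
    InN i (((g⁻¹ : (Matrix (Fin n) (Fin n) K)ˣ) : Matrix (Fin n) (Fin n) K) - 1) := by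
  set B : Matrix (Fin n) (Fin n) K := (g : Matrix (Fin n) (Fin n) K) - 1 with hBdef
  set C : Matrix (Fin n) (Fin n) K := ((g⁻¹ : (Matrix (Fin n) (Fin n) K)ˣ) : Matrix (Fin n) (Fin n) K) - 1 with hCdef
  have hmul : (g : Matrix (Fin n) (Fin n) K) * ((g⁻¹ : (Matrix (Fin n) (Fin n) K)ˣ) : Matrix (Fin n) (Fin n) K) = 1 := g.mul_inv
  have key : C = -B - B * C := by
    rw [hCdef, hBdef, mul_sub, sub_mul, sub_mul, hmul]
    simp only [one_mul, mul_one]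
    abel
  have main : ∀ m : ℕ, ∀ j k : Fin n, n - (j : ℕ) ≤ m → (k : ℕ) < (j : ℕ) → C j k = 0 := by
    intro m
    induction m with
    | zero => intro j k hj hk; exact absurd hj (by have := j.isLt; omega)
    | succ m ih =>
      intro j k hj hk
      rw [key]
      simp only [Matrix.sub_apply, Matrix.neg_apply]
      rw [hg j k (by omega), Matrix.mul_apply]
      rw [Finset.sum_eq_zero (fun l _ => ?_)]
      · ring
      · by_cases hl : (l : ℕ) < (j : ℕ) + i
        · rw [hg j l hl, zero_mul]
        · have := l.isLt
          rw [ih l k (by omega) (by omega), mul_zero]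
  have hC0 : InN 0 C := fun j k hk => main n j k (by omega) (by omega)
  intro j k hk
  rw [key]
  have h2 : InN i (B * C) := by simpa using hg.mul hC0
  simp [Matrix.sub_apply, Matrix.neg_apply, hg j k hk, h2 j k hk]

example : True := trivial

lemma lower_of_inN {i : ℕ} (hi : 1 ≤ i) {g : Matrix (Fin n) (Fin n) K}
    (hg : InN i (g - 1)) : InN 0 g := by
  intro j k hk
  have := hg j k (by omega)
  have hne : j ≠ k := fun e => by omega
  rw [Matrix.sub_apply, Matrix.one_apply_ne hne, sub_zero] at this
  exact this

/-- Part 1 core: commutator estimate over any commutative ring. -/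
lemma comm_inN {i : ℕ} (hi : 1 ≤ i) (g u : (Matrix (Fin n) (Fin n) K)ˣ)
    (hg : InN 1 ((g : Matrix (Fin n) (Fin n) K) - 1))
    (hu : InN i ((u : Matrix (Fin n) (Fin n) K) - 1)) :
    InN (i + 1) ((( ⁅g, u⁆ : (Matrix (Fin n) (Fin n) K)ˣ) : Matrix (Fin n) (Fin n) K) - 1) := by
  set M := Matrix (Fin n) (Fin n) K
  have hco : ((⁅g, u⁆ : Mˣ) : M) = (g : M) * u * (g⁻¹ : Mˣ) * (u⁻¹ : Mˣ) := by
    simp only [commutatorElement_def, Units.val_mul]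
  set A : M := (g : M) - 1 with hA
  set B : M := (u : M) - 1 with hB
  have key : ((⁅g, u⁆ : Mˣ) : M) - 1
      = (A * B - B * A) * (((g⁻¹ : Mˣ) : M) * ((u⁻¹ : Mˣ) : M)) := by
    rw [hco, hA, hB]
    have h1 : ((u : M) * g) * (((g⁻¹ : Mˣ) : M) * ((u⁻¹ : Mˣ) : M)) = 1 := by
      calc ((u : M) * g) * (((g⁻¹ : Mˣ) : M) * ((u⁻¹ : Mˣ) : M))
          = (u : M) * ((g : M) * ((g⁻¹ : Mˣ) : M)) * ((u⁻¹ : Mˣ) : M) := by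
            noncomm_ring
        _ = 1 := by rw [g.mul_inv, mul_one, u.mul_inv]
    have h2 : ((g : M) - 1) * ((u : M) - 1) - ((u : M) - 1) * ((g : M) - 1)
        = (g : M) * u - (u : M) * g := by noncomm_ring
    rw [h2, sub_mul, h1]
    noncomm_ring
  rw [key]
  have hAB : InN (i + 1) (A * B - B * A) := by
    have h1 : InN (1 + i) (A * B) := hg.mul hu
    have h2 : InN (i + 1) (B * A) := hu.mul hg
    exact (h1.mono (by omega)).sub h2
  have hginv : InN 0 (((g⁻¹ : Mˣ) : M)) := lower_of_inN le_rfl (inv_inN le_rfl hg)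
  have huinv : InN 0 (((u⁻¹ : Mˣ) : M)) := lower_of_inN hi (inv_inN hi hu)
  have := hAB.mul (hginv.mul huinv)
  simpa using this

lemma stdBasisMatrix_neg' (p q : Fin n) (a : K) :
    single p q (-a) = -(single p q a) := by
  ext j k
  simp [Matrix.single, Matrix.of_apply]
  split <;> simp

/-- transvection as a unit -/
def tUnit (p q : Fin n) (h : p ≠ q) (a : K) : (Matrix (Fin n) (Fin n) K)ˣ where
  val := 1 + single p q a
  inv := 1 - single p q a
  val_inv := by
    have h0 : single p q a * single p q a = 0 :=
      Matrix.single_mul_single_of_ne (c := a) (i := p) (j := q) (h := Ne.symm h) (d := a)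
    simp only [mul_sub, mul_add, add_mul, sub_mul, one_mul, mul_one, h0]
    abel
  inv_val := by
    have h0 : single p q a * single p q a = 0 :=
      Matrix.single_mul_single_of_ne (c := a) (i := p) (j := q) (h := Ne.symm h) (d := a)
    simp only [mul_sub, mul_add, add_mul, sub_mul, one_mul, mul_one, h0]
    abel

lemma tUnit_val (p q : Fin n) (h : p ≠ q) (a : K) :
    ((tUnit p q h a : (Matrix (Fin n) (Fin n) K)ˣ) : Matrix (Fin n) (Fin n) K)
      = 1 + single p q a := rfl

/-- commutator of chained transvections -/
lemma tUnit_commutator (p q r : Fin n) (hpq : p ≠ q) (hqr : q ≠ r) (hpr : p ≠ r) (a b : K) :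
    ⁅tUnit p q hpq a, tUnit q r hqr b⁆ = tUnit p r hpr (a * b) := by
  apply Units.ext
  show ((tUnit p q hpq a : (Matrix (Fin n) (Fin n) K)ˣ) : Matrix (Fin n) (Fin n) K)
      * (tUnit q r hqr b : (Matrix (Fin n) (Fin n) K)ˣ)
      * (((tUnit p q hpq a)⁻¹ : (Matrix (Fin n) (Fin n) K)ˣ) : Matrix (Fin n) (Fin n) K)
      * (((tUnit q r hqr b)⁻¹ : (Matrix (Fin n) (Fin n) K)ˣ) : Matrix (Fin n) (Fin n) K)
      = ((tUnit p r hpr (a*b) : (Matrix (Fin n) (Fin n) K)ˣ) : Matrix (Fin n) (Fin n) K)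
  show (1 + single p q a) * (1 + single q r b) * (1 - single p q a)
      * (1 - single q r b) = 1 + single p r (a * b)
  set E := single p q a
  set F := single q r b
  set G := single p r (a * b)
  have hEF : E * F = G := Matrix.single_mul_single_same (c := a) (i := p) (j := q) (k := r) (d := b)
  have hEE : E * E = 0 := Matrix.single_mul_single_of_ne (c := a) (i := p) (j := q) (h := Ne.symm hpq) (d := a)
  have hFE : F * E = 0 := Matrix.single_mul_single_of_ne (c := b) (i := q) (j := r) (h := Ne.symm hpr) (d := a)
  have hGE : G * E = 0 := Matrix.single_mul_single_of_ne (c := a*b) (i := p) (j := r) (h := Ne.symm hpr) (d := a)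
  have hFF : F * F = 0 := Matrix.single_mul_single_of_ne (c := b) (i := q) (j := r) (h := Ne.symm hqr) (d := b)
  have hGF : G * F = 0 := Matrix.single_mul_single_of_ne (c := a*b) (i := p) (j := r) (h := Ne.symm hqr) (d := b)
  have h1 : (1 + E) * (1 + F) = 1 + E + F + G := by
    simp only [mul_add, add_mul, one_mul, mul_one, hEF]; abel
  have h2 : (1 + E + F + G) * (1 - E) = 1 + F + G := by
    simp only [mul_sub, add_mul, mul_one, one_mul, hEE, hFE, hGE]; abel
  have h3 : (1 + F + G) * (1 - F) = 1 + G := by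
    simp only [mul_sub, add_mul, mul_one, one_mul, hFF, hGF]; abel
  rw [h1, h2, h3]

lemma stdBasis_inN {m : ℕ} {p q : Fin n} (h : (p : ℕ) + m ≤ (q : ℕ)) (a : K) :
    InN m (single p q a) := by
  intro j k hk
  apply Matrix.single_apply_of_ne
  rintro ⟨rfl, rfl⟩
  omega

lemma mul_inN {m : ℕ} {x y : Matrix (Fin n) (Fin n) K}
    (hx : InN m (x - 1)) (hy : InN m (y - 1)) : InN m (x * y - 1) := by
  have key : x * y - 1 = (x - 1) * (y - 1) + (x - 1) + (y - 1) := by noncomm_ring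
  rw [key]
  exact (((hx.mul hy).mono (by omega)).add hx).add hy

/-- the set of generating commutators -/
def commSet (n i : ℕ) (K : Type*) [CommRing K] : Set (Matrix (Fin n) (Fin n) K)ˣ :=
  {c | ∃ g u : (Matrix (Fin n) (Fin n) K)ˣ,
      InT 1 (g : Matrix (Fin n) (Fin n) K) ∧ InT i (u : Matrix (Fin n) (Fin n) K) ∧ c = ⁅g, u⁆}

lemma gen_mem {i : ℕ} (hi : 1 ≤ i) :
    ∀ d m : ℕ, n ≤ m + d → i + 1 ≤ m → ∀ w : (Matrix (Fin n) (Fin n) K)ˣ,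
      InN m ((w : Matrix (Fin n) (Fin n) K) - 1) →
      w ∈ Subgroup.closure (commSet n i K) := by
  intro d
  induction d with
  | zero =>
    intro m hnm him w hw
    have : (w : Matrix (Fin n) (Fin n) K) = 1 := by
      have h0 : (w : Matrix (Fin n) (Fin n) K) - 1 = 0 := by
        ext j k
        have := hw j k (by have := k.isLt; omega)
        simpa using this
      have := sub_eq_zero.mp h0
      exact this
    have : w = 1 := Units.ext this
    rw [this]; exact Subgroup.one_mem _
  | succ d ihd =>
    intro m hnm him w hw
    by_cases hd : n ≤ m + d
    · exact ihd m hd him w hw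
    -- inner induction on remaining rows
    have inner : ∀ e r : ℕ, n ≤ r + e → ∀ w : (Matrix (Fin n) (Fin n) K)ˣ,
        InN m ((w : Matrix (Fin n) (Fin n) K) - 1) →
        (∀ j k : Fin n, (j : ℕ) < r → (k : ℕ) = (j : ℕ) + m → (w : Matrix (Fin n) (Fin n) K) j k = 0) →
        w ∈ Subgroup.closure (commSet n i K) := by
      intro e
      induction e with
      | zero =>
        intro r hr w hw hzero
        refine ihd (m + 1) (by omega) (by omega) w ?_
        intro j k hk
        by_cases hk' : (k : ℕ) < (j : ℕ) + m
        · exact hw j k hk'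
        · have hkeq : (k : ℕ) = (j : ℕ) + m := by omega
          have hw0 : (w : Matrix (Fin n) (Fin n) K) j k = 0 :=
            hzero j k (by have := j.isLt; omega) hkeq
          have hne : j ≠ k := fun h => by rw [h] at hkeq; omega
          simp [Matrix.sub_apply, hw0, Matrix.one_apply_ne hne]
      | succ e ihe =>
        intro r hr w hw hzero
        by_cases hre : n ≤ r + e
        · exact ihe r hre w hw hzero
        by_cases hrm : r + m < n
        · -- kill the entry (r, r+m)
          have hrn : r < n := by omega
          have hr1n : r + 1 < n := by omega
          set jr : Fin n := ⟨r, hrn⟩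
          set kr : Fin n := ⟨r + m, hrm⟩
          set j1 : Fin n := ⟨r + 1, hr1n⟩
          have hne1 : jr ≠ kr := fun h => by
            have : (jr : ℕ) = (kr : ℕ) := by rw [h]
            simp [jr, kr] at this; omega
          have hne2 : jr ≠ j1 := fun h => by
            have : (jr : ℕ) = (j1 : ℕ) := by rw [h]
            simp [jr, j1] at this
          have hne3 : j1 ≠ kr := fun h => by
            have : (j1 : ℕ) = (kr : ℕ) := by rw [h]
            simp [j1, kr] at this; omega
          set a : K := (w : Matrix (Fin n) (Fin n) K) jr kr
          set eu : (Matrix (Fin n) (Fin n) K)ˣ := tUnit jr kr hne1 (-a)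
          have heuS : eu ∈ commSet n i K := by
            refine ⟨tUnit jr j1 hne2 (-a), tUnit j1 kr hne3 1, ?_, ?_, ?_⟩
            · rw [InT_iff_InN le_rfl, tUnit_val]
              simpa using stdBasis_inN (by simp [jr, j1]) (-a)
            · rw [InT_iff_InN hi, tUnit_val]
              simpa using stdBasis_inN (by simp [j1, kr]; omega) (1 : K)
            · rw [tUnit_commutator jr j1 kr hne2 hne3 hne1, mul_one]
          set w' : (Matrix (Fin n) (Fin n) K)ˣ := eu * w
          have hw'N : InN m ((w' : Matrix (Fin n) (Fin n) K) - 1) := by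
            have h1 : InN m (((eu : (Matrix (Fin n) (Fin n) K)ˣ) : Matrix (Fin n) (Fin n) K) - 1) := by
              rw [tUnit_val]
              simpa using stdBasis_inN (by simp [jr, kr]) (-a)
            have := mul_inN h1 hw
            simpa [w', Units.val_mul] using this
          have hw'z : ∀ j k : Fin n, (j : ℕ) < r + 1 → (k : ℕ) = (j : ℕ) + m →
              (w' : Matrix (Fin n) (Fin n) K) j k = 0 := by
            intro j k hj hk
            have hcoe : (w' : Matrix (Fin n) (Fin n) K)
                = (1 + single jr kr (-a)) * (w : Matrix (Fin n) (Fin n) K) := by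
              simp [w', eu, Units.val_mul, tUnit_val]
            rw [hcoe, Matrix.add_mul, Matrix.one_mul, Matrix.add_apply]
            by_cases hjr : j = jr
            · subst hjr
              have hkkr : k = kr := by
                apply Fin.ext
                simp [kr] at hk ⊢
                simp [jr] at hj
                omega
              subst hkkr
              rw [Matrix.single_mul_apply_same]
              have hdiag : (w : Matrix (Fin n) (Fin n) K) kr kr = 1 := by
                have := hw kr kr (by omega)
                rw [Matrix.sub_apply, Matrix.one_apply_eq, sub_eq_zero] at this
                exact this
              rw [hdiag]
              simp [a]
            · rw [Matrix.single_mul_apply_of_ne (c := -a) (i := jr) (j := kr) (a := j) (b := k) (h := hjr)]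
              have hjlt : (j : ℕ) < r := by
                rcases Nat.lt_succ_iff_lt_or_eq.mp hj with h | h
                · exact h
                · exact absurd (Fin.ext h : j = jr) hjr
              rw [hzero j k hjlt hk, add_zero]
          have hw'mem : w' ∈ Subgroup.closure (commSet n i K) :=
            ihe (r + 1) (by omega) w' hw'N hw'z
          have heumem : eu ∈ Subgroup.closure (commSet n i K) := Subgroup.subset_closure heuS
          have hwid : eu⁻¹ * w' = w := inv_mul_cancel_left eu w
          rw [← hwid]
          exact Subgroup.mul_mem _ (Subgroup.inv_mem _ heumem) hw'mem
        · -- no entry to kill in row r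
          refine ihe (r + 1) (by omega) w hw ?_
          intro j k hj hk
          rcases Nat.lt_succ_iff_lt_or_eq.mp hj with h | h
          · exact hzero j k h hk
          · exact absurd (k.isLt) (by omega)
    exact inner n 0 (by omega) w hw (fun j k hj _ => absurd hj (by omega))

lemma comm_InT {i : ℕ} (hi : 1 ≤ i) (g u : (Matrix (Fin n) (Fin n) K)ˣ)
    (hg : InT 1 (g : Matrix (Fin n) (Fin n) K)) (hu : InT i (u : Matrix (Fin n) (Fin n) K)) :
    InT (i + 1) ((⁅g, u⁆ : (Matrix (Fin n) (Fin n) K)ˣ) : Matrix (Fin n) (Fin n) K) := by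
  rw [InT_iff_InN (by omega)]
  exact comm_inN hi g u ((InT_iff_InN le_rfl).mp hg) ((InT_iff_InN hi).mp hu)

lemma main_iff {i : ℕ} (hi : 1 ≤ i) (w : (Matrix (Fin n) (Fin n) K)ˣ) :
    w ∈ Subgroup.closure (commSet n i K) ↔ InT (i + 1) (w : Matrix (Fin n) (Fin n) K) := by
  constructor
  · intro hw
    rw [InT_iff_InN (by omega)]
    induction hw using Subgroup.closure_induction with
    | mem c hc =>
      obtain ⟨g, u, hg, hu, rfl⟩ := hc
      exact comm_inN hi g u ((InT_iff_InN le_rfl).mp hg) ((InT_iff_InN hi).mp hu)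
    | one =>
      intro j k _
      simp
    | mul x y _ _ hx hy => simpa [Units.val_mul] using mul_inN hx hy
    | inv x _ hx => exact inv_inN (by omega) hx
  · intro hw
    rw [InT_iff_InN (by omega)] at hw
    exact gen_mem hi n (i + 1) (by omega) le_rfl w hw

/-- The chain `T = T_1 > T_2 > ⋯ > T_n = 1` is the lower central series of
`T = UT(n,K)`: in general `[T, T_i] ≤ T_{i+1}`, with equality when `K = ℤ` or `K = ℚ`. -/
theorem commutator_InT {n : ℕ} (i : ℕ) (hi : 1 ≤ i) :
    (∀ (K : Type) [CommRing K] (g u : (Matrix (Fin n) (Fin n) K)ˣ),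
      InT 1 (g : Matrix (Fin n) (Fin n) K) → InT i (u : Matrix (Fin n) (Fin n) K) →
      InT (i + 1) ((⁅g, u⁆ : (Matrix (Fin n) (Fin n) K)ˣ) : Matrix (Fin n) (Fin n) K)) ∧
    (∀ w : (Matrix (Fin n) (Fin n) ℤ)ˣ,
      w ∈ Subgroup.closure {c : (Matrix (Fin n) (Fin n) ℤ)ˣ |
          ∃ g u : (Matrix (Fin n) (Fin n) ℤ)ˣ,
            InT 1 (g : Matrix (Fin n) (Fin n) ℤ) ∧ InT i (u : Matrix (Fin n) (Fin n) ℤ) ∧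
            c = ⁅g, u⁆} ↔
        InT (i + 1) (w : Matrix (Fin n) (Fin n) ℤ)) ∧
    (∀ w : (Matrix (Fin n) (Fin n) ℚ)ˣ,
      w ∈ Subgroup.closure {c : (Matrix (Fin n) (Fin n) ℚ)ˣ |
          ∃ g u : (Matrix (Fin n) (Fin n) ℚ)ˣ,
            InT 1 (g : Matrix (Fin n) (Fin n) ℚ) ∧ InT i (u : Matrix (Fin n) (Fin n) ℚ) ∧
            c = ⁅g, u⁆} ↔
        InT (i + 1) (w : Matrix (Fin n) (Fin n) ℚ)) := by
  refine ⟨fun K _ g u hg hu => comm_InT hi g u hg hu, fun w => ?_, fun w => ?_⟩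
  · exact main_iff hi w
  · exact main_iff hi w
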